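/- Let d ≥ 1 be an integer, ε > 0, and let m and s be positive integers. The mechanism M : ({0,1}^d)^* → ℤ^d that samples ω uniformly from {m, 2m, ..., sm}, samples η₁, ..., η_d independently from the discrete Laplace distribution Lap_ℤ(d/ε), and outputs (⌊sum(x)_i + ω + η_i⌋_{ms})_{i=1}^d, is (ε, 0)-differentially private with respect to insert-delete adjacency. -/

import Mathlib

open scoped ENNReal

/-- `rdown k z` rounds the integer `z` down to the nearest multiple of `k`. -/
def rdown (k : ℕ) (z : ℤ) : ℤ := z - z % (k : ℤ)

/-- Insert-delete adjacency on databases: `x'` is obtained from `x` by inserting or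
deleting exactly one entry. -/
def Adjacent {α : Type*} (x x' : List α) : Prop :=
  (∃ a l₁ l₂, x = l₁ ++ l₂ ∧ x' = l₁ ++ a :: l₂) ∨
  (∃ a l₁ l₂, x' = l₁ ++ l₂ ∧ x = l₁ ++ a :: l₂)

/-- The coordinatewise sum of the entries of a database `x ∈ ({0,1}^d)^*`. -/
def dbSum {d : ℕ} (x : List (Fin d → Bool)) (i : Fin d) : ℤ :=
  (x.map fun row => if row i then (1 : ℤ) else 0).sum

/-- `(ε, δ)`-differential privacy of a mechanism `M` with respect to an adjacency
relation `Adj`. -/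
def IsDP {X : Type*} {Y : Type*} (Adj : X → X → Prop) (M : X → PMF Y) (ε δ : ℝ) : Prop :=
  ∀ x x', Adj x x' → ∀ S : Set Y,
    (M x).toOuterMeasure S ≤
      ENNReal.ofReal (Real.exp ε) * (M x').toOuterMeasure S + ENNReal.ofReal δ

lemma aux_L (t : ℝ) (ht : 0 < t) (L : PMF ℤ)
    (hL : ∀ x : ℤ, L x = ENNReal.ofReal
      ((Real.exp (1 / t) - 1) / (Real.exp (1 / t) + 1) *
        Real.exp (-|(x : ℝ)| / t)))
    (a b : ℤ) (h : |(a : ℝ) - (b : ℝ)| ≤ 1) :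
    L a ≤ ENNReal.ofReal (Real.exp (1 / t)) * L b := by
  rw [hL a, hL b, ← ENNReal.ofReal_mul (Real.exp_nonneg _)]
  apply ENNReal.ofReal_le_ofReal
  set C := (Real.exp (1 / t) - 1) / (Real.exp (1 / t) + 1) with hC
  have hC0 : 0 ≤ C := by
    apply div_nonneg
    · have : (1 : ℝ) ≤ Real.exp (1 / t) := Real.one_le_exp (by positivity)
      linarith
    · positivity
  have key : Real.exp (-|(a : ℝ)| / t) ≤ Real.exp (1 / t) * Real.exp (-|(b : ℝ)| / t) := by
    rw [← Real.exp_add]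
    apply Real.exp_le_exp.mpr
    have habs : |(b : ℝ)| ≤ |(a : ℝ)| + 1 := by
      have h2 := abs_sub_abs_le_abs_sub (b : ℝ) (a : ℝ)
      rw [abs_sub_comm] at h2
      linarith
    rw [← add_div]
    gcongr
    linarith
  calc C * Real.exp (-|(a : ℝ)| / t)
      ≤ C * (Real.exp (1 / t) * Real.exp (-|(b : ℝ)| / t)) :=
        mul_le_mul_of_nonneg_left key hC0
    _ = Real.exp (1 / t) * (C * Real.exp (-|(b : ℝ)| / t)) := by ring

lemma aux_F (K : ℕ) (v : ℤ) (L : PMF ℤ) (E : ℝ≥0∞)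
    (hstep : ∀ a b : ℤ, |(a : ℝ) - (b : ℝ)| ≤ 1 → L a ≤ E * L b) (c : ℤ) :
    ((∑' η : ℤ, if rdown K (c + η) = v then L η else 0) ≤
      E * ∑' η : ℤ, if rdown K (c + 1 + η) = v then L η else 0) ∧
    ((∑' η : ℤ, if rdown K (c + 1 + η) = v then L η else 0) ≤
      E * ∑' η : ℤ, if rdown K (c + η) = v then L η else 0) := by
  constructor
  · have h1 : (∑' η : ℤ, if rdown K (c + η) = v then L η else 0)
        = ∑' η : ℤ, if rdown K (c + 1 + η) = v then L (η + 1) else 0 := by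
      refine ((Equiv.addRight (1 : ℤ)).tsum_eq
        (fun η => if rdown K (c + η) = v then L η else 0)).symm.trans
        (tsum_congr fun η => ?_)
      simp only [Equiv.coe_addRight]
      simp only [show c + (η + 1) = c + 1 + η from by ring]
    rw [h1, ← ENNReal.tsum_mul_left]
    refine ENNReal.tsum_le_tsum fun η => ?_
    split
    · exact hstep (η + 1) η (by push_cast; simp)
    · simp
  · have h1 : (∑' η : ℤ, if rdown K (c + 1 + η) = v then L η else 0)
        = ∑' η : ℤ, if rdown K (c + η) = v then L (η - 1) else 0 := by
      refine ((Equiv.subRight (1 : ℤ)).tsum_eq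
        (fun η => if rdown K (c + 1 + η) = v then L η else 0)).symm.trans
        (tsum_congr fun η => ?_)
      simp only [Equiv.subRight_apply]
      rw [show c + 1 + (η - 1) = c + η from by ring]
    rw [h1, ← ENNReal.tsum_mul_left]
    refine ENNReal.tsum_le_tsum fun η => ?_
    split
    · exact hstep (η - 1) η (by push_cast; simp)
    · simp

theorem stmt12 (d : ℕ) (hd : 1 ≤ d) (ε : ℝ) (hε : 0 < ε) (m s : ℕ)
    (hm : 0 < m) (hs : 0 < s)
    (L : PMF ℤ)
    (hL : ∀ x : ℤ, L x = ENNReal.ofReal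
      ((Real.exp (1 / ((d : ℝ) / ε)) - 1) / (Real.exp (1 / ((d : ℝ) / ε)) + 1) *
        Real.exp (-|(x : ℝ)| / ((d : ℝ) / ε))))
    (M : List (Fin d → Bool) → PMF (Fin d → ℤ))
    (hM : ∀ x y, M x y = (s : ℝ≥0∞)⁻¹ * ∑ j ∈ Finset.Icc 1 s, ∏ i,
      ∑' η : ℤ,
        if rdown (m * s) (dbSum x i + (j : ℤ) * (m : ℤ) + η) = y i then L η else 0) :
    IsDP Adjacent M ε 0 := by
  have hd0 : (0 : ℝ) < (d : ℝ) := by exact_mod_cast hd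
  have ht : (0 : ℝ) < (d : ℝ) / ε := by positivity
  set E : ℝ≥0∞ := ENNReal.ofReal (Real.exp (1 / ((d : ℝ) / ε))) with hEdef
  set Eε : ℝ≥0∞ := ENNReal.ofReal (Real.exp ε) with hEεdef
  have hstep : ∀ a b : ℤ, |(a : ℝ) - (b : ℝ)| ≤ 1 → L a ≤ E * L b :=
    fun a b h => aux_L _ ht L hL a b h
  have hE1 : (1 : ℝ≥0∞) ≤ E := by
    rw [hEdef]
    exact ENNReal.one_le_ofReal.mpr (Real.one_le_exp (by positivity))
  have hEd : E ^ d = Eε := by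
    rw [hEdef, hEεdef, ← ENNReal.ofReal_pow (Real.exp_nonneg _), ← Real.exp_nat_mul]
    congr 1
    field_simp
  -- key pointwise inequality
  have key : ∀ (u v : List (Fin d → Bool)) (b : Fin d → ℤ),
      (∀ i, b i = 0 ∨ b i = 1) → (∀ i, dbSum v i = dbSum u i + b i) →
      ∀ y, M u y ≤ Eε * M v y ∧ M v y ≤ Eε * M u y := by
    intro u v b hb hsum y
    have hcoord : ∀ (i : Fin d) (j : ℕ),
        ((∑' η : ℤ, if rdown (m * s) (dbSum u i + (j : ℤ) * (m : ℤ) + η) = y i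
            then L η else 0) ≤
          E * ∑' η : ℤ, if rdown (m * s) (dbSum v i + (j : ℤ) * (m : ℤ) + η) = y i
            then L η else 0) ∧
        ((∑' η : ℤ, if rdown (m * s) (dbSum v i + (j : ℤ) * (m : ℤ) + η) = y i
            then L η else 0) ≤
          E * ∑' η : ℤ, if rdown (m * s) (dbSum u i + (j : ℤ) * (m : ℤ) + η) = y i
            then L η else 0) := by
      intro i j
      rcases hb i with h0 | h1
      · have hv : dbSum v i = dbSum u i := by rw [hsum i, h0, add_zero]
        rw [hv]
        exact ⟨le_mul_of_one_le_left zero_le hE1,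
          le_mul_of_one_le_left zero_le hE1⟩
      · have hv : dbSum v i = dbSum u i + 1 := by rw [hsum i, h1]
        rw [hv]
        simp only [show ∀ η : ℤ, dbSum u i + 1 + (j : ℤ) * (m : ℤ) + η
            = dbSum u i + (j : ℤ) * (m : ℤ) + 1 + η from fun η => by ring]
        exact aux_F (m * s) (y i) L E hstep (dbSum u i + (j : ℤ) * (m : ℤ))
    have hprod : ∀ (c c' : Fin d → ℤ),
        (∀ i, (∑' η : ℤ, if rdown (m * s) (c i + η) = y i then L η else 0) ≤
          E * ∑' η : ℤ, if rdown (m * s) (c' i + η) = y i then L η else 0) →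
        (∏ i, ∑' η : ℤ, if rdown (m * s) (c i + η) = y i then L η else 0) ≤
          Eε * ∏ i, ∑' η : ℤ, if rdown (m * s) (c' i + η) = y i then L η else 0 := by
      intro c c' h
      calc (∏ i, ∑' η : ℤ, if rdown (m * s) (c i + η) = y i then L η else 0)
          ≤ ∏ i, (E * ∑' η : ℤ, if rdown (m * s) (c' i + η) = y i then L η else 0) :=
            Finset.prod_le_prod' fun i _ => h i
        _ = E ^ d * ∏ i, ∑' η : ℤ, if rdown (m * s) (c' i + η) = y i then L η else 0 := by
            rw [Finset.prod_mul_distrib, Finset.prod_const, Finset.card_univ,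
              Fintype.card_fin]
        _ = Eε * ∏ i, ∑' η : ℤ, if rdown (m * s) (c' i + η) = y i then L η else 0 := by
            rw [hEd]
    constructor
    · rw [hM u y, hM v y]
      calc (s : ℝ≥0∞)⁻¹ * ∑ j ∈ Finset.Icc 1 s, ∏ i, ∑' η : ℤ,
            (if rdown (m * s) (dbSum u i + (j : ℤ) * (m : ℤ) + η) = y i then L η else 0)
          ≤ (s : ℝ≥0∞)⁻¹ * (Eε * ∑ j ∈ Finset.Icc 1 s, ∏ i, ∑' η : ℤ,
            (if rdown (m * s) (dbSum v i + (j : ℤ) * (m : ℤ) + η) = y i then L η else 0)) := by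
            refine mul_le_mul_right ?_ _
            rw [Finset.mul_sum]
            exact Finset.sum_le_sum fun j _ =>
              hprod (fun i => dbSum u i + (j : ℤ) * (m : ℤ))
                (fun i => dbSum v i + (j : ℤ) * (m : ℤ)) (fun i => (hcoord i j).1)
        _ = Eε * ((s : ℝ≥0∞)⁻¹ * ∑ j ∈ Finset.Icc 1 s, ∏ i, ∑' η : ℤ,
            (if rdown (m * s) (dbSum v i + (j : ℤ) * (m : ℤ) + η) = y i then L η else 0)) := by
            rw [mul_left_comm]
    · rw [hM u y, hM v y]
      calc (s : ℝ≥0∞)⁻¹ * ∑ j ∈ Finset.Icc 1 s, ∏ i, ∑' η : ℤ,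
            (if rdown (m * s) (dbSum v i + (j : ℤ) * (m : ℤ) + η) = y i then L η else 0)
          ≤ (s : ℝ≥0∞)⁻¹ * (Eε * ∑ j ∈ Finset.Icc 1 s, ∏ i, ∑' η : ℤ,
            (if rdown (m * s) (dbSum u i + (j : ℤ) * (m : ℤ) + η) = y i then L η else 0)) := by
            refine mul_le_mul_right ?_ _
            rw [Finset.mul_sum]
            exact Finset.sum_le_sum fun j _ =>
              hprod (fun i => dbSum v i + (j : ℤ) * (m : ℤ))
                (fun i => dbSum u i + (j : ℤ) * (m : ℤ)) (fun i => (hcoord i j).2)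
        _ = Eε * ((s : ℝ≥0∞)⁻¹ * ∑ j ∈ Finset.Icc 1 s, ∏ i, ∑' η : ℤ,
            (if rdown (m * s) (dbSum u i + (j : ℤ) * (m : ℤ) + η) = y i then L η else 0)) := by
            rw [mul_left_comm]
  -- sum relation for adjacent databases
  have hdb : ∀ (a : Fin d → Bool) (l₁ l₂ : List (Fin d → Bool)) (i : Fin d),
      dbSum (l₁ ++ a :: l₂) i = dbSum (l₁ ++ l₂) i + (if a i then 1 else 0) := by
    intro a l₁ l₂ i
    simp only [dbSum, List.map_append, List.sum_append, List.map_cons, List.sum_cons]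
    ring
  intro x x' hadj S
  have hmain : ∀ y, M x y ≤ Eε * M x' y := by
    rcases hadj with ⟨a, l₁, l₂, hx, hx'⟩ | ⟨a, l₁, l₂, hx', hx⟩
    · subst hx; subst hx'
      intro y
      exact (key (l₁ ++ l₂) (l₁ ++ a :: l₂) (fun i => if a i then 1 else 0)
        (fun i => by by_cases h : a i <;> simp [h]) (fun i => hdb a l₁ l₂ i) y).1
    · subst hx; subst hx'
      intro y
      exact (key (l₁ ++ l₂) (l₁ ++ a :: l₂) (fun i => if a i then 1 else 0)
        (fun i => by by_cases h : a i <;> simp [h]) (fun i => hdb a l₁ l₂ i) y).2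
  rw [PMF.toOuterMeasure_apply, PMF.toOuterMeasure_apply]
  simp only [ENNReal.ofReal_zero, add_zero]
  calc (∑' y, S.indicator (⇑(M x)) y)
      ≤ ∑' y, Eε * S.indicator (⇑(M x')) y := by
        refine ENNReal.tsum_le_tsum fun y => ?_
        by_cases h : y ∈ S
        · simpa [Set.indicator_of_mem h] using hmain y
        · simp [Set.indicator_of_notMem h]
    _ = Eε * ∑' y, S.indicator (⇑(M x')) y := ENNReal.tsum_mul_left
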